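/- Let D = 3 and for 0 < g < 2^{-8}·3^3 define v = (g^{1/3}/2^{1/3})·[(1+√(1−(2^8/3^3)g))^{1/3} + (1−√(1−(2^8/3^3)g))^{1/3}] and G = ((1+4v)^{1/4} − (2−(1+4v)^{1/2})^{1/2}) / (2(vg)^{1/4}). Then G satisfies G = 1 + g·G^4. -/

import Mathlib

open Real

set_option maxHeartbeats 1000000 in
/-- Explicit closed-form solution of the quartic melonic equation `G = 1 + g G⁴`
in dimension `D = 3`, for `0 < g < 2⁻⁸·3³ = 27/256`. -/
theorem melonic_closed_form_D3 (g v G : ℝ)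
    (hg : 0 < g) (hg' : g < 27 / 256)
    (hv : v = g ^ ((1 : ℝ) / 3) / 2 ^ ((1 : ℝ) / 3) *
      ((1 + Real.sqrt (1 - 2 ^ 8 / 3 ^ 3 * g)) ^ ((1 : ℝ) / 3) +
        (1 - Real.sqrt (1 - 2 ^ 8 / 3 ^ 3 * g)) ^ ((1 : ℝ) / 3)))
    (hG : G = ((1 + 4 * v) ^ ((1 : ℝ) / 4) -
        (2 - (1 + 4 * v) ^ ((1 : ℝ) / 2)) ^ ((1 : ℝ) / 2)) /
      (2 * (v * g) ^ ((1 : ℝ) / 4))) :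
    G = 1 + g * G ^ 4 := by
  have h13 : (1 : ℝ) / 3 = ((3 : ℕ) : ℝ)⁻¹ := by norm_num
  have h14 : (1 : ℝ) / 4 = ((4 : ℕ) : ℝ)⁻¹ := by norm_num
  set s := Real.sqrt (1 - 2 ^ 8 / 3 ^ 3 * g) with hsdef
  have hg1 : (0 : ℝ) < 1 - 2 ^ 8 / 3 ^ 3 * g := by nlinarith
  have hs0 : 0 ≤ s := Real.sqrt_nonneg _
  have hs2 : s ^ 2 = 1 - 2 ^ 8 / 3 ^ 3 * g := Real.sq_sqrt hg1.le
  have hs1 : s < 1 := by nlinarith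
  set c := (1 + s) ^ ((1 : ℝ) / 3) with hcdef
  set d := (1 - s) ^ ((1 : ℝ) / 3) with hddef
  have hc3 : c ^ 3 = 1 + s := by
    rw [hcdef, h13, Real.rpow_inv_natCast_pow (by linarith) (by norm_num)]
  have hd3 : d ^ 3 = 1 - s := by
    rw [hddef, h13, Real.rpow_inv_natCast_pow (by linarith) (by norm_num)]
  have hcpos : 0 < c := Real.rpow_pos_of_pos (by linarith) _
  have hdpos : 0 < d := Real.rpow_pos_of_pos (by linarith) _
  set p := g ^ ((1 : ℝ) / 3) with hpdef
  set q := (2 : ℝ) ^ ((1 : ℝ) / 3) with hqdef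
  have hp3 : p ^ 3 = g := by
    rw [hpdef, h13, Real.rpow_inv_natCast_pow hg.le (by norm_num)]
  have hq3 : q ^ 3 = 2 := by
    rw [hqdef, h13, Real.rpow_inv_natCast_pow (by norm_num) (by norm_num)]
  have hppos : 0 < p := Real.rpow_pos_of_pos hg _
  have hqpos : 0 < q := Real.rpow_pos_of_pos (by norm_num) _
  have hvpos : 0 < v := by
    rw [hv]; positivity
  have hv3 : v ^ 3 = g / 2 * (c + d) ^ 3 := by
    rw [hv]
    field_simp
    linear_combination 2 * hp3 - g * hq3
  have hcd3 : (c * d * (c + d)) ^ 3 = (8 / 3 * v) ^ 3 := by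
    have : (c * d * (c + d)) ^ 3 = c ^ 3 * d ^ 3 * (c + d) ^ 3 := by ring
    rw [this, hc3, hd3]
    linear_combination (-512 / 27) * hv3 - (c + d) ^ 3 * hs2
  have key : c * d * (c + d) = 8 / 3 * v := by
    have h1 : 0 ≤ c * d * (c + d) := by positivity
    have h2 : 0 ≤ 8 / 3 * v := by positivity
    exact (pow_left_inj₀ h1 h2 (by norm_num : 3 ≠ 0)).mp hcd3
  have hcubic : v ^ 3 = g * (1 + 4 * v) := by
    linear_combination hv3 + g / 2 * hc3 + g / 2 * hd3 + 3 * g / 2 * key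
  have hvlt : v < 3 / 4 := by nlinarith [sq_nonneg (8 * v + 3), sq_nonneg v]
  set A := (1 + 4 * v) ^ ((1 : ℝ) / 4) with hAdef
  have hApos : 0 < A := Real.rpow_pos_of_pos (by linarith) _
  have hA4 : A ^ 4 = 1 + 4 * v := by
    rw [hAdef, h14, Real.rpow_inv_natCast_pow (by linarith) (by norm_num)]
  have hA2lt : A ^ 2 < 2 := by nlinarith
  have hu : (1 + 4 * v) ^ ((1 : ℝ) / 2) = A ^ 2 := by
    rw [hAdef, ← Real.rpow_natCast ((1 + 4 * v) ^ ((1 : ℝ) / 4)) 2,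
      ← Real.rpow_mul (by linarith)]
    norm_num
  rw [hu] at hG
  set t := (2 - A ^ 2) ^ ((1 : ℝ) / 2) with htdef
  have ht0 : 0 ≤ t := Real.rpow_nonneg (by linarith) _
  have ht2 : t ^ 2 = 2 - A ^ 2 := by
    rw [htdef, (by norm_num : (1 : ℝ) / 2 = ((2 : ℕ) : ℝ)⁻¹),
      Real.rpow_inv_natCast_pow (by linarith) (by norm_num)]
  have hvg : (v * g) ^ ((1 : ℝ) / 4) = v / A := by
    have h1 : v * g = (v / A) ^ 4 := by
      field_simp
      linear_combination g * hA4 - hcubic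
    rw [h1, h14, Real.pow_rpow_inv_natCast (by positivity) (by norm_num)]
  rw [hvg] at hG
  have hG2 : 2 * v * G = A * (A - t) := by
    rw [hG]; field_simp
  have h1 : v ^ 3 = g * A ^ 4 := by linear_combination hcubic - g * hA4
  have hpoly : 8 * v ^ 3 * (A * (A - t)) = 16 * v ^ 4 + g * (A * (A - t)) ^ 4 := by
    linear_combination (8 * (A ^ 2 - A * t) - 16 * v) * h1 +
      (-g * (4 * A ^ 6 + 4 * A ^ 4 - 4 * A ^ 5 * t + A ^ 4 * (t ^ 2 - 2 + A ^ 2))) * ht2 +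
      (4 * g * A ^ 4) * hA4
  have h16 : (16 : ℝ) * v ^ 4 ≠ 0 := by positivity
  refine mul_left_cancel₀ h16 ?_
  linear_combination (8 * v ^ 3 - g * ((2 * v * G) ^ 3 + (2 * v * G) ^ 2 * (A * (A - t)) +
      (2 * v * G) * (A * (A - t)) ^ 2 + (A * (A - t)) ^ 3)) * hG2 + hpoly
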